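/- The Laplace mechanism satisfies ε-DP: for a query u with ℓ₁-global sensitivity Δ₁u, the mechanism M(X) = u(X) + L, where L is Laplace-distributed with location 0 and scale Δ₁u/ε, satisfies ε-differential privacy. -/

import Mathlib

open MeasureTheory

/-- The Laplace distribution with location 0 and scale `b`, as a measure on ℝ. -/
noncomputable def laplaceMeasure (b : ℝ) : Measure ℝ :=
  MeasureTheory.volume.withDensity
    (fun x => ENNReal.ofReal ((1 / (2 * b)) * Real.exp (-|x| / b)))

lemma laplace_density_meas (b c : ℝ) :
    Measurable fun x : ℝ => ENNReal.ofReal ((1 / (2 * b)) * Real.exp (-|x - c| / b)) := by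
  fun_prop

lemma laplaceMeasure_map_add (b c : ℝ) :
    (laplaceMeasure b).map (fun y => c + y) =
      MeasureTheory.volume.withDensity
        (fun y => ENNReal.ofReal ((1 / (2 * b)) * Real.exp (-|y - c| / b))) := by
  have hmeas := laplace_density_meas b c
  have hmeas0 : Measurable fun x : ℝ => ENNReal.ofReal ((1 / (2 * b)) * Real.exp (-|x| / b)) := by
    simpa using laplace_density_meas b 0
  ext S hS
  rw [Measure.map_apply (measurable_const_add c) hS, laplaceMeasure,
    withDensity_apply _ ((measurable_const_add c) hS),
    withDensity_apply _ hS]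
  have hvol : (MeasureTheory.volume : Measure ℝ).map (fun y => c + y) = volume :=
    map_add_left_eq_self volume c
  calc ∫⁻ x in (fun y => c + y) ⁻¹' S,
        ENNReal.ofReal ((1 / (2 * b)) * Real.exp (-|x| / b)) ∂volume
      = ∫⁻ y in S, ENNReal.ofReal ((1 / (2 * b)) * Real.exp (-|y - c| / b))
          ∂((volume : Measure ℝ).map (fun y => c + y)) := by
        rw [setLIntegral_map hS hmeas (measurable_const_add c)]
        simp
    _ = ∫⁻ y in S, ENNReal.ofReal ((1 / (2 * b)) * Real.exp (-|y - c| / b)) ∂volume := by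
        rw [hvol]

/-- The Laplace mechanism satisfies ε-DP: for a real-valued query `u` with global sensitivity
at most `Δ`, adding Laplace(0, Δ/ε) noise yields an ε-differentially private mechanism. -/
theorem laplace_mechanism_dp {DB : Type*} (neighbor : DB → DB → Prop)
    (u : DB → ℝ) (Δ ε : ℝ) (hΔ : 0 < Δ) (hε : 0 < ε)
    (hsens : ∀ X X', neighbor X X' → |u X - u X'| ≤ Δ) :
    ∀ X X', neighbor X X' → ∀ S : Set ℝ, MeasurableSet S →
      (laplaceMeasure (Δ / ε)).map (fun y => u X + y) S ≤
        ENNReal.ofReal (Real.exp ε) * (laplaceMeasure (Δ / ε)).map (fun y => u X' + y) S := by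
  intro X X' hnb S hS
  set b := Δ / ε with hb
  have hbpos : 0 < b := div_pos hΔ hε
  rw [laplaceMeasure_map_add, laplaceMeasure_map_add,
    withDensity_apply _ hS, withDensity_apply _ hS,
    ← lintegral_const_mul _ (laplace_density_meas b (u X'))]
  refine setLIntegral_mono (by fun_prop) fun y _ => ?_
  rw [← ENNReal.ofReal_mul (Real.exp_nonneg ε)]
  apply ENNReal.ofReal_le_ofReal
  rw [mul_left_comm]
  apply mul_le_mul_of_nonneg_left _ (by positivity)
  rw [← Real.exp_add]
  apply Real.exp_le_exp.mpr
  have h1 : |y - u X'| - |y - u X| ≤ Δ := by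
    calc |y - u X'| - |y - u X| ≤ |(y - u X') - (y - u X)| := abs_sub_abs_le_abs_sub _ _
      _ = |u X - u X'| := by ring_nf
      _ ≤ Δ := hsens X X' hnb
  have hεb : ε * b = Δ := by rw [hb]; field_simp
  have key : -|y - u X| ≤ ε * b + -|y - u X'| := by nlinarith
  calc -|y - u X| / b ≤ (ε * b + -|y - u X'|) / b := by gcongr
    _ = ε + -|y - u X'| / b := by field_simp
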